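/- Let D_∞ = ℤ/2 ∗ ℤ/2 be the infinite dihedral group with generators a and t (the images of the nontrivial elements of the two free factors, so a² = t² = 1), and let λ be its left regular representation on ℓ²(D_∞). Then for (z_0, z_1, z_2) ∈ ℂ³ \ {0}, the operator z_0 I + z_1 λ(a) + z_2 λ(t) is not invertible if and only if there exists x ∈ [−1, 1] ⊂ ℝ with z_0² − z_1² − z_2² − 2z_1z_2x = 0. -/

import Mathlib

open scoped ENNReal

/-- The infinite dihedral group `D_∞ = ℤ/2 ∗ ℤ/2`. -/
abbrev DInf : Type := Monoid.Coprod (Multiplicative (ZMod 2)) (Multiplicative (ZMod 2))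

noncomputable instance : DecidableEq DInf := fun _ _ => Classical.propDecidable _

noncomputable section AuxDInf

/-! ### Group-theoretic preliminaries -/

/-- hom from `Multiplicative (ZMod 2)` determined by an involution. -/
def involHom {G : Type*} [Monoid G] (σ : G) (hσ : σ * σ = 1) :
    Multiplicative (ZMod 2) →* G where
  toFun x := if x = 1 then 1 else σ
  map_one' := if_pos rfl
  map_mul' x y := by
    have h : ∀ z : Multiplicative (ZMod 2), z = 1 ∨ z = Multiplicative.ofAdd 1 := by decide
    have h1 : (Multiplicative.ofAdd (1 : ZMod 2)) ≠ 1 := by decide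
    have h2 : (Multiplicative.ofAdd (1 : ZMod 2)) * Multiplicative.ofAdd (1 : ZMod 2) = 1 := by
      decide
    rcases h x with rfl | rfl <;> rcases h y with rfl | rfl <;>
      simp [h1, h2, hσ]

def tauPerm : Equiv.Perm ℝ :=
  ⟨fun x => 2 - x, fun x => 2 - x, fun x => by ring, fun x => by ring⟩

lemma sigma_sq : (Equiv.neg ℝ) * (Equiv.neg ℝ) = 1 := by
  ext x; simp [Equiv.Perm.mul_apply]

lemma tau_sq : tauPerm * tauPerm = 1 := by
  ext x; simp [tauPerm, Equiv.Perm.mul_apply]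

def phiD : DInf →* Equiv.Perm ℝ :=
  Monoid.Coprod.lift (involHom (Equiv.neg ℝ) sigma_sq) (involHom tauPerm tau_sq)

lemma sigma_tau_pow (n : ℕ) (x : ℝ) :
    (((Equiv.neg ℝ) * tauPerm) ^ n) x = x - 2 * n := by
  induction n generalizing x with
  | zero => simp
  | succ n ih =>
    rw [pow_succ', Equiv.Perm.mul_apply, ih]
    have : ∀ y : ℝ, ((Equiv.neg ℝ) * tauPerm) y = y - 2 := by
      intro y; simp [Equiv.Perm.mul_apply, tauPerm]
    rw [this]
    push_cast; ring

lemma u_zpow_injective (a t : DInf)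
    (ha : a = Monoid.Coprod.inl (Multiplicative.ofAdd (1 : ZMod 2)))
    (ht : t = Monoid.Coprod.inr (Multiplicative.ofAdd (1 : ZMod 2))) :
    Function.Injective fun n : ℤ => (a * t) ^ n := by
  rw [injective_zpow_iff_not_isOfFinOrder]
  intro hfin
  obtain ⟨n, hn, hpow⟩ := isOfFinOrder_iff_pow_eq_one.mp hfin
  have h1 : (Multiplicative.ofAdd (1 : ZMod 2)) ≠ 1 := by decide
  have hphi : phiD (a * t) = (Equiv.neg ℝ) * tauPerm := by
    rw [map_mul, ha, ht]
    simp [phiD, involHom, h1]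
  have : phiD ((a * t) ^ n) = 1 := by rw [hpow, map_one]
  rw [map_pow, hphi] at this
  have h0 := congrArg (fun (p : Equiv.Perm ℝ) => p 0) this
  simp [sigma_tau_pow n 0] at h0
  omega

lemma a_mul_a (a : DInf)
    (ha : a = Monoid.Coprod.inl (Multiplicative.ofAdd (1 : ZMod 2))) : a * a = 1 := by
  rw [ha, ← map_mul]
  have : (Multiplicative.ofAdd (1 : ZMod 2)) * Multiplicative.ofAdd (1 : ZMod 2) = 1 := by decide
  rw [this, map_one]

lemma t_mul_t (t : DInf)
    (ht : t = Monoid.Coprod.inr (Multiplicative.ofAdd (1 : ZMod 2))) : t * t = 1 := by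
  rw [ht, ← map_mul]
  have : (Multiplicative.ofAdd (1 : ZMod 2)) * Multiplicative.ofAdd (1 : ZMod 2) = 1 := by decide
  rw [this, map_one]

/-! ### The Hilbert space -/

abbrev HD : Type := lp (fun _ : DInf => ℂ) 2

instance : Nontrivial HD := by
  refine ⟨⟨lp.single 2 (1 : DInf) (1 : ℂ), 0, fun h => one_ne_zero (α := ℂ) ?_⟩⟩
  calc (1 : ℂ) = (lp.single 2 (1 : DInf) (1 : ℂ) : ∀ _ : DInf, ℂ) 1 :=
        (lp.single_apply_self (E := fun _ : DInf => ℂ) 2 (1 : DInf) (1 : ℂ)).symm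
  _ = ((0 : HD) : ∀ _ : DInf, ℂ) 1 := by rw [h]
  _ = 0 := by rw [lp.coeFn_zero]; rfl

/-! ### Lemmas about the regular representation -/

section lamlemmas
variable {lam : DInf → (HD →L[ℂ] HD)}
  (hl : ∀ (g : DInf) (f : HD) (x : DInf), (lam g f : ∀ _ : DInf, ℂ) x = f (g⁻¹ * x))
include hl

lemma lam_mul (g h : DInf) : lam g * lam h = lam (g * h) := by
  ext f x
  rw [ContinuousLinearMap.mul_apply, hl, hl, hl, mul_inv_rev, mul_assoc]

lemma lam_one : lam 1 = 1 := by
  ext f x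
  rw [ContinuousLinearMap.one_apply, hl, inv_one, one_mul]

lemma lam_norm (g : DInf) (f : HD) : ‖lam g f‖ = ‖f‖ := by
  have hp : 0 < (2 : ℝ≥0∞).toReal := by norm_num
  rw [lp.norm_eq_tsum_rpow hp, lp.norm_eq_tsum_rpow hp]
  congr 1
  have := (Equiv.mulLeft g⁻¹).tsum_eq (fun y => ‖f y‖ ^ (2 : ℝ≥0∞).toReal)
  rw [← this]
  exact tsum_congr fun x => by simp only [hl, Equiv.coe_mulLeft]

lemma lam_opNorm (g : DInf) : ‖lam g‖ ≤ 1 :=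
  ContinuousLinearMap.opNorm_le_bound _ zero_le_one fun f => by
    rw [lam_norm hl, one_mul]

lemma lam_single (g h : DInf) (c : ℂ) :
    lam g (lp.single 2 h c) = lp.single 2 (g * h) c := by
  refine lp.ext (E := fun _ : DInf => ℂ) (p := 2) (funext fun x => ?_)
  rw [hl]
  by_cases hx : x = g * h
  · subst hx
    rw [lp.single_apply_self]
    rw [inv_mul_cancel_left, lp.single_apply_self]
  · rw [lp.single_apply_ne 2 _ _ hx, lp.single_apply_ne]
    intro hc
    exact hx (by rw [← hc, mul_inv_cancel_left])

lemma lam_adjoint (g : DInf) :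
    ContinuousLinearMap.adjoint (lam g) = lam g⁻¹ := by
  symm
  rw [ContinuousLinearMap.eq_adjoint_iff]
  intro x y
  rw [lp.inner_eq_tsum, lp.inner_eq_tsum]
  have := (Equiv.mulLeft g).tsum_eq
    (fun w => (inner ℂ (x w) ((lam g y : ∀ _ : DInf, ℂ) w) : ℂ))
  rw [← this]
  refine tsum_congr fun w => ?_
  simp only [hl, inv_inv, Equiv.coe_mulLeft, inv_mul_cancel_left]

end lamlemmas

/-! ### The sign unitary -/

def chiC : Multiplicative (ZMod 2) →* ℂ where
  toFun x := if x = 1 then 1 else -1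
  map_one' := if_pos rfl
  map_mul' x y := by
    have h : ∀ z : Multiplicative (ZMod 2), z = 1 ∨ z = Multiplicative.ofAdd 1 := by decide
    have h1 : (Multiplicative.ofAdd (1 : ZMod 2)) ≠ 1 := by decide
    have h2 : (Multiplicative.ofAdd (1 : ZMod 2)) * Multiplicative.ofAdd (1 : ZMod 2) = 1 := by
      decide
    rcases h x with rfl | rfl <;> rcases h y with rfl | rfl <;> simp [h1, h2]

def epsD : DInf →* ℂ := Monoid.Coprod.lift chiC chiC

lemma chiC_pm (x : Multiplicative (ZMod 2)) : chiC x = 1 ∨ chiC x = -1 := by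
  by_cases h : x = 1 <;> simp [chiC, h]

lemma epsD_pm (g : DInf) : epsD g = 1 ∨ epsD g = -1 := by
  induction g using Monoid.Coprod.induction_on with
  | inl m => rw [epsD, Monoid.Coprod.lift_apply_inl]; exact chiC_pm m
  | inr n => rw [epsD, Monoid.Coprod.lift_apply_inr]; exact chiC_pm n
  | mul x y hx hy =>
    rw [map_mul]
    rcases hx with h | h <;> rcases hy with h' | h' <;> rw [h, h'] <;> norm_num

lemma epsD_sq (g : DInf) : epsD g * epsD g = 1 := by
  rcases epsD_pm g with h | h <;> rw [h] <;> norm_num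

lemma epsD_norm (g : DInf) : ‖epsD g‖ = 1 := by
  rcases epsD_pm g with h | h <;> rw [h] <;> norm_num

lemma epsD_a : epsD (Monoid.Coprod.inl (Multiplicative.ofAdd (1 : ZMod 2))) = -1 := by
  rw [epsD, Monoid.Coprod.lift_apply_inl]
  have h1 : (Multiplicative.ofAdd (1 : ZMod 2)) ≠ 1 := by decide
  simp [chiC, h1]

lemma epsD_t : epsD (Monoid.Coprod.inr (Multiplicative.ofAdd (1 : ZMod 2))) = -1 := by
  rw [epsD, Monoid.Coprod.lift_apply_inr]
  have h1 : (Multiplicative.ofAdd (1 : ZMod 2)) ≠ 1 := by decide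
  simp [chiC, h1]

lemma memU (f : HD) : Memℓp (fun x : DInf => epsD x * f x) 2 := by
  apply memℓp_gen
  refine ((lp.memℓp f).summable (by norm_num)).congr fun x => ?_
  rw [norm_mul, epsD_norm, one_mul]

def Ulin : HD →ₗ[ℂ] HD where
  toFun f := ⟨fun x => epsD x * f x, memU f⟩
  map_add' f g := by
    refine lp.ext (E := fun _ : DInf => ℂ) (p := 2) (funext fun x => ?_)
    show epsD x * (f + g) x = _
    rw [lp.coeFn_add, Pi.add_apply, mul_add]
    rfl
  map_smul' c f := by
    refine lp.ext (E := fun _ : DInf => ℂ) (p := 2) (funext fun x => ?_)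
    show epsD x * (c • f) x = _
    rw [lp.coeFn_smul, Pi.smul_apply, smul_eq_mul]
    show _ = c • (⟨fun x => epsD x * f x, memU f⟩ : HD) x
    show _ = c • (epsD x * f x)
    rw [smul_eq_mul]
    ring

lemma Ulin_apply (f : HD) (x : DInf) : (Ulin f : ∀ _ : DInf, ℂ) x = epsD x * f x := rfl

lemma Ulin_norm (f : HD) : ‖Ulin f‖ = ‖f‖ := by
  have hp : 0 < (2 : ℝ≥0∞).toReal := by norm_num
  rw [lp.norm_eq_tsum_rpow hp, lp.norm_eq_tsum_rpow hp]
  congr 1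
  refine tsum_congr fun x => ?_
  rw [Ulin_apply, norm_mul, epsD_norm, one_mul]

def UD : HD →L[ℂ] HD := Ulin.mkContinuous 1 fun f => by rw [Ulin_norm, one_mul]

lemma UD_apply (f : HD) (x : DInf) : (UD f : ∀ _ : DInf, ℂ) x = epsD x * f x := rfl

lemma UD_mul_UD : UD * UD = 1 := by
  ext f x
  rw [ContinuousLinearMap.mul_apply, UD_apply, UD_apply, ContinuousLinearMap.one_apply,
    ← mul_assoc, epsD_sq, one_mul]

lemma UD_lam {lam : DInf → (HD →L[ℂ] HD)}
    (hl : ∀ (g : DInf) (f : HD) (x : DInf), (lam g f : ∀ _ : DInf, ℂ) x = f (g⁻¹ * x))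
    (g : DInf) (hg : g⁻¹ = g) : UD * lam g * UD = epsD g • lam g := by
  ext f x
  rw [ContinuousLinearMap.mul_apply, ContinuousLinearMap.mul_apply, UD_apply, hl, UD_apply,
    map_mul, hg, ContinuousLinearMap.smul_apply, lp.coeFn_smul, Pi.smul_apply, hl,
    smul_eq_mul, hg]
  linear_combination (epsD g * f (g * x)) * epsD_sq x

/-! ### Algebraic identities -/

lemma ringTS {R : Type*} [Ring R] [Algebra ℂ R] (A B : R) (hA : A * A = 1) (hB : B * B = 1)
    (z₀ z₁ z₂ : ℂ) :
    (z₀ • 1 + z₁ • A + z₂ • B) * (z₀ • 1 - z₁ • A - z₂ • B) =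
      (z₀ ^ 2 - z₁ ^ 2 - z₂ ^ 2) • 1 - (z₁ * z₂) • (A * B + B * A) := by
  simp only [mul_sub, sub_mul, mul_add, add_mul, smul_mul_smul_comm, one_mul, mul_one,
    hA, hB, smul_add, smul_sub, smul_smul]
  match_scalars <;> ring

lemma ringST {R : Type*} [Ring R] [Algebra ℂ R] (A B : R) (hA : A * A = 1) (hB : B * B = 1)
    (z₀ z₁ z₂ : ℂ) :
    (z₀ • 1 - z₁ • A - z₂ • B) * (z₀ • 1 + z₁ • A + z₂ • B) =
      (z₀ ^ 2 - z₁ ^ 2 - z₂ ^ 2) • 1 - (z₁ * z₂) • (A * B + B * A) := by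
  simp only [mul_sub, sub_mul, mul_add, add_mul, smul_mul_smul_comm, one_mul, mul_one,
    hA, hB, smul_add, smul_sub, smul_smul]
  match_scalars <;> ring

lemma isUnit_of_left_right {R : Type*} [Ring R] {T a b : R} (h1 : a * T = 1) (h2 : T * b = 1) :
    IsUnit T := by
  have hab : a = b := by
    calc a = a * (T * b) := by rw [h2, mul_one]
    _ = (a * T) * b := by rw [mul_assoc]
    _ = b := by rw [h1, one_mul]
  exact ⟨⟨T, b, h2, hab ▸ h1⟩, rfl⟩

lemma isUnit_csmul_iff {R : Type*} [Ring R] [Algebra ℂ R] {k : ℂ} (hk : k ≠ 0) (X : R) :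
    IsUnit (k • X) ↔ IsUnit X := by
  have h1 : ∀ (c : ℂ) (Y : R), IsUnit Y → IsUnit (c • Y) ∨ c = 0 := by
    intro c Y hY
    by_cases hc : c = 0
    · right; exact hc
    · left
      have : c • Y = (c • 1) * Y := by rw [smul_mul_assoc, one_mul]
      rw [this]
      refine (IsUnit.mul ?_ hY)
      refine isUnit_of_left_right (a := c⁻¹ • (1 : R)) (b := c⁻¹ • (1 : R)) ?_ ?_ <;>
        rw [smul_mul_smul_comm, one_mul] <;>
        first
          | rw [inv_mul_cancel₀ hc, one_smul]
          | rw [mul_inv_cancel₀ hc, one_smul]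
  constructor
  · intro h
    have := h1 k⁻¹ _ h
    rcases this with h' | h'
    · rwa [smul_smul, inv_mul_cancel₀ hk, one_smul] at h'
    · exact absurd h' (inv_ne_zero hk)
  · intro h
    rcases h1 k X h with h' | h'
    · exact h'
    · exact absurd h' hk

/-! ### The Weyl sequence identity -/

lemma weyl_key {E : Type*} [NormedAddCommGroup E] [NormedSpace ℂ E] (M : E →L[ℂ] E)
    (e : ℤ → E) (hMe : ∀ k : ℤ, M (e k) = e (k + 1) + e (k - 1)) (q : ℂ)
    (hq : q * (starRingEnd ℂ) q = 1) (N : ℕ) :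
    M (∑ k ∈ Finset.range (N + 1), q ^ k • e k) -
        (q + (starRingEnd ℂ) q) • (∑ k ∈ Finset.range (N + 1), q ^ k • e k) =
      q ^ N • e (N + 1) - ((starRingEnd ℂ) q) • e 0 + e (-1) - q ^ (N + 1) • e N := by
  induction N with
  | zero =>
    rw [show (0 : ℕ) + 1 = 1 from rfl]
    simp only [Finset.range_one, Finset.sum_singleton, Nat.cast_zero, pow_zero, one_smul]
    rw [hMe 0]
    norm_num
    match_scalars <;> ring
  | succ N ih =>
    rw [Finset.sum_range_succ]
    have expand : ∀ (f g : E),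
        M (f + q ^ (N + 1) • g) - (q + (starRingEnd ℂ) q) • (f + q ^ (N + 1) • g) =
          (M f - (q + (starRingEnd ℂ) q) • f) +
            q ^ (N + 1) • (M g - (q + (starRingEnd ℂ) q) • g) := by
      intro f g
      rw [map_add, map_smul]
      module
    rw [expand, ih, hMe]
    have h1 : ((N + 1 : ℕ) : ℤ) = (N : ℤ) + 1 := by push_cast; ring
    have h2 : ((N : ℤ) + 1) + 1 = ((N + 1 + 1 : ℕ) : ℤ) := by push_cast; ring
    have h3 : ((N : ℤ) + 1) - 1 = (N : ℤ) := by ring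
    rw [h1, h2, h3]
    match_scalars
    any_goals ring1
    all_goals first
      | linear_combination q ^ N * hq
      | linear_combination (-(q ^ N)) * hq

/-! ### The spectrum of `λ(u) + λ(u⁻¹)` -/

section spec
variable {lam : DInf → (HD →L[ℂ] HD)}
  (hl : ∀ (g : DInf) (f : HD) (x : DInf), (lam g f : ∀ _ : DInf, ℂ) x = f (g⁻¹ * x))
  {a t : DInf}
  (ha : a = Monoid.Coprod.inl (Multiplicative.ofAdd (1 : ZMod 2)))
  (ht : t = Monoid.Coprod.inr (Multiplicative.ofAdd (1 : ZMod 2)))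
include hl ha ht

lemma spec_subset {z : ℂ} (hz : z ∈ spectrum ℂ (lam (a * t) + lam (t * a))) :
    ∃ x : ℝ, x ∈ Set.Icc (-1 : ℝ) 1 ∧ z = 2 * x := by
  have hta : t * a = (a * t)⁻¹ := by
    refine (inv_eq_of_mul_eq_one_right ?_).symm
    rw [mul_assoc, ← mul_assoc t t a, t_mul_t t ht, one_mul, a_mul_a a ha]
  have hsa : IsSelfAdjoint (lam (a * t) + lam (t * a)) := by
    rw [IsSelfAdjoint, star_add, ContinuousLinearMap.star_eq_adjoint,
      ContinuousLinearMap.star_eq_adjoint, lam_adjoint hl, lam_adjoint hl, hta, inv_inv,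
      add_comm]
  have h1 := hsa.mem_spectrum_eq_re hz
  have h2 : ‖z‖ ≤ 2 := by
    refine le_trans (spectrum.norm_le_norm_of_mem hz) ?_
    refine le_trans (norm_add_le _ _) ?_
    have ha' := lam_opNorm hl (a * t)
    have hb' := lam_opNorm hl (t * a)
    linarith
  refine ⟨z.re / 2, ?_, ?_⟩
  · have h3 : |z.re| ≤ 2 := le_trans (Complex.abs_re_le_norm z)
      h2
    rw [abs_le] at h3
    rw [Set.mem_Icc]
    constructor <;> [linarith [h3.1]; linarith [h3.2]]
  · conv_lhs => rw [h1]
    push_cast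
    ring

set_option maxHeartbeats 2000000 in
lemma two_x_mem_spectrum {x : ℝ} (hx : x ∈ Set.Icc (-1 : ℝ) 1) :
    (2 * (x : ℂ)) ∈ spectrum ℂ (lam (a * t) + lam (t * a)) := by
  have hta : t * a = (a * t)⁻¹ := by
    refine (inv_eq_of_mul_eq_one_right ?_).symm
    rw [mul_assoc, ← mul_assoc t t a, t_mul_t t ht, one_mul, a_mul_a a ha]
  set u : DInf := a * t with hu
  rw [hta]
  set M : HD →L[ℂ] HD := lam u + lam u⁻¹ with hM
  have hinj : Function.Injective fun n : ℤ => u ^ n := u_zpow_injective a t ha ht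
  set e : ℤ → HD := fun k => lp.single 2 (u ^ k) (1 : ℂ) with he
  have hMe : ∀ k : ℤ, M (e k) = e (k + 1) + e (k - 1) := by
    intro k
    rw [hM, ContinuousLinearMap.add_apply, he]
    dsimp only
    rw [lam_single hl, lam_single hl]
    have e1 : u * u ^ k = u ^ (k + 1) := by group
    have e2 : u⁻¹ * u ^ k = u ^ (k - 1) := by group
    rw [e1, e2]
  have horth : Orthonormal ℂ e := by
    rw [orthonormal_iff_ite]
    intro i j
    rw [he]
    dsimp only
    rw [lp.inner_single_left, RCLike.inner_apply, map_one, mul_one]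
    by_cases hij : i = j
    · subst hij
      rw [lp.single_apply_self, if_pos rfl]
    · rw [lp.single_apply_ne 2 _ _ (fun hc => hij (hinj hc)), if_neg hij]
  obtain ⟨hx1, hx2⟩ := Set.mem_Icc.mp hx
  set s : ℝ := Real.sqrt (1 - x ^ 2) with hs_def
  have hs : s * s = 1 - x ^ 2 := Real.mul_self_sqrt (by nlinarith)
  set q : ℂ := ⟨x, s⟩ with hqdef
  have hnq : Complex.normSq q = 1 := by
    rw [hqdef, Complex.normSq_mk]
    nlinarith
  have hq : q * (starRingEnd ℂ) q = 1 := by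
    rw [Complex.mul_conj, hnq]
    norm_num
  have hq2 : q + (starRingEnd ℂ) q = 2 * (x : ℂ) := by
    rw [Complex.add_conj]
    have : q.re = x := rfl
    rw [this]
    push_cast
    ring
  have hqn : ‖q‖ = 1 := by
    have h1 : ‖q‖ ^ 2 = 1 := by rw [← Complex.normSq_eq_norm_sq, hnq]
    have h2 := norm_nonneg q
    nlinarith
  have hej : ∀ j : ℤ, ‖e j‖ = 1 := by
    intro j
    rw [he]
    dsimp only
    have := lp.norm_single (E := fun _ : DInf => ℂ) (p := 2) (by norm_num) (u ^ j) (1 : ℂ)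
    rw [this, norm_one]
  rw [spectrum.mem_iff]
  intro hU
  obtain ⟨d, hd⟩ := hU
  set c : ℝ := ‖((d⁻¹ : (HD →L[ℂ] HD)ˣ) : HD →L[ℂ] HD)‖ * 4 with hc
  have hc0 : (0 : ℝ) ≤ c := by positivity
  set N : ℕ := ⌈c ^ 2⌉₊ with hN
  set f : HD := ∑ k ∈ Finset.range (N + 1), q ^ k • e k with hf
  have hWeyl := weyl_key M e hMe q hq N
  have hDf : ‖(algebraMap ℂ (HD →L[ℂ] HD) (2 * (x : ℂ)) - M) f‖ ≤ 4 := by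
    have heq : (algebraMap ℂ (HD →L[ℂ] HD) (2 * (x : ℂ)) - M) f =
        -(M f - (q + (starRingEnd ℂ) q) • f) := by
      rw [Algebra.algebraMap_eq_smul_one, ContinuousLinearMap.sub_apply,
        ContinuousLinearMap.smul_apply, ContinuousLinearMap.one_apply, ← hq2, neg_sub]
    rw [heq, norm_neg, hf, hWeyl]
    have n1 : ‖q ^ N • e ((N : ℤ) + 1)‖ ≤ 1 := by
      rw [norm_smul, norm_pow, hqn, one_pow, hej, one_mul]
    have n2 : ‖((starRingEnd ℂ) q) • e 0‖ ≤ 1 := by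
      rw [norm_smul, RCLike.norm_conj, hqn, hej, one_mul]
    have n3 : ‖e (-1)‖ ≤ 1 := le_of_eq (hej _)
    have n4 : ‖q ^ (N + 1) • e (N : ℤ)‖ ≤ 1 := by
      rw [norm_smul, norm_pow, hqn, one_pow, hej, one_mul]
    calc ‖q ^ N • e ((N : ℤ) + 1) - ((starRingEnd ℂ) q) • e 0 + e (-1) -
        q ^ (N + 1) • e (N : ℤ)‖
        ≤ ‖q ^ N • e ((N : ℤ) + 1) - ((starRingEnd ℂ) q) • e 0 + e (-1)‖ +
          ‖q ^ (N + 1) • e (N : ℤ)‖ := norm_sub_le _ _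
      _ ≤ ‖q ^ N • e ((N : ℤ) + 1) - ((starRingEnd ℂ) q) • e 0‖ + ‖e (-1)‖ +
          ‖q ^ (N + 1) • e (N : ℤ)‖ := by
            have := norm_add_le (q ^ N • e ((N : ℤ) + 1) - ((starRingEnd ℂ) q) • e 0) (e (-1))
            linarith
      _ ≤ ‖q ^ N • e ((N : ℤ) + 1)‖ + ‖((starRingEnd ℂ) q) • e 0‖ + ‖e (-1)‖ +
          ‖q ^ (N + 1) • e (N : ℤ)‖ := by
            have := norm_sub_le (q ^ N • e ((N : ℤ) + 1)) (((starRingEnd ℂ) q) • e 0)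
            linarith
      _ ≤ 4 := by linarith
  have hfn : ‖f‖ ^ 2 = (N : ℝ) + 1 := by
    have horth' : Orthonormal ℂ (fun k : ℕ => e (k : ℤ)) :=
      horth.comp (fun k : ℕ => (k : ℤ)) (fun m n h => Nat.cast_injective h)
    have hi := horth'.inner_sum (fun k => q ^ k) (fun k => q ^ k) (Finset.range (N + 1))
    rw [← hf] at hi
    rw [inner_self_eq_norm_sq_to_K (𝕜 := ℂ)] at hi
    have hterm : ∀ k ∈ Finset.range (N + 1), (starRingEnd ℂ) (q ^ k) * q ^ k = 1 := by
      intro k _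
      rw [map_pow, ← mul_pow, mul_comm, hq, one_pow]
    have hsum : ∑ k ∈ Finset.range (N + 1), (starRingEnd ℂ) (q ^ k) * q ^ k
        = ((N : ℂ) + 1) := by
      rw [Finset.sum_congr rfl hterm, Finset.sum_const, Finset.card_range, nsmul_eq_mul,
        mul_one]
      push_cast; ring
    rw [hsum] at hi
    refine Complex.ofReal_injective ?_
    push_cast
    exact hi
  have hfle : ‖f‖ ≤ c := by
    have h1 : f = ((d⁻¹ : (HD →L[ℂ] HD)ˣ) : HD →L[ℂ] HD)
        ((algebraMap ℂ (HD →L[ℂ] HD) (2 * (x : ℂ)) - M) f) := by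
      rw [← hd, ← ContinuousLinearMap.mul_apply, Units.inv_mul,
        ContinuousLinearMap.one_apply]
    rw [h1]
    refine le_trans (ContinuousLinearMap.le_opNorm _ _) ?_
    rw [hc]
    exact mul_le_mul_of_nonneg_left hDf (norm_nonneg _)
  have hsq : ‖f‖ ^ 2 ≤ c ^ 2 := by nlinarith [norm_nonneg f]
  have hceil : c ^ 2 ≤ (N : ℝ) := Nat.le_ceil (c ^ 2)
  rw [hfn] at hsq
  linarith

end spec

end AuxDInf

set_option maxHeartbeats 4000000 in
/-- For the left regular representation `λ` of the infinite dihedral group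
`D_∞ = ⟨a, t | a² = t² = 1⟩` on `ℓ²(D_∞)`, the operator `z₀I + z₁λ(a) + z₂λ(t)` is not
invertible iff `z₀² − z₁² − z₂² − 2z₁z₂x = 0` for some `x ∈ [−1, 1]`. -/
theorem stmt7
    (lam : DInf → (lp (fun _ : DInf => ℂ) 2 →L[ℂ] lp (fun _ : DInf => ℂ) 2))
    (hlam : ∀ (g : DInf) (f : lp (fun _ : DInf => ℂ) 2) (x : DInf),
      (lam g f : ∀ _ : DInf, ℂ) x = f (g⁻¹ * x))
    (a t : DInf)
    (ha : a = Monoid.Coprod.inl (Multiplicative.ofAdd (1 : ZMod 2)))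
    (ht : t = Monoid.Coprod.inr (Multiplicative.ofAdd (1 : ZMod 2)))
    (z₀ z₁ z₂ : ℂ) (hz : ¬(z₀ = 0 ∧ z₁ = 0 ∧ z₂ = 0)) :
    ¬ IsUnit (z₀ • (1 : lp (fun _ : DInf => ℂ) 2 →L[ℂ] lp (fun _ : DInf => ℂ) 2)
        + z₁ • lam a + z₂ • lam t) ↔
      ∃ x : ℝ, x ∈ Set.Icc (-1 : ℝ) 1 ∧
        z₀ ^ 2 - z₁ ^ 2 - z₂ ^ 2 - 2 * z₁ * z₂ * (x : ℂ) = 0 := by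
  have hl := hlam
  have haa : a * a = 1 := a_mul_a a ha
  have htt : t * t = 1 := t_mul_t t ht
  have hAA : lam a * lam a = 1 := by rw [lam_mul hl, haa, lam_one hl]
  have hBB : lam t * lam t = 1 := by rw [lam_mul hl, htt, lam_one hl]
  set T : HD →L[ℂ] HD := z₀ • (1 : HD →L[ℂ] HD) + z₁ • lam a + z₂ • lam t with hT
  set S : HD →L[ℂ] HD := z₀ • (1 : HD →L[ℂ] HD) - z₁ • lam a - z₂ • lam t with hS
  set M : HD →L[ℂ] HD := lam (a * t) + lam (t * a) with hM
  set C : HD →L[ℂ] HD :=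
    (z₀ ^ 2 - z₁ ^ 2 - z₂ ^ 2) • (1 : HD →L[ℂ] HD) - (z₁ * z₂) • M with hC
  have hTS : T * S = C := by
    rw [hT, hS, hC, hM, ← lam_mul hl a t, ← lam_mul hl t a]
    exact ringTS _ _ hAA hBB _ _ _
  have hST : S * T = C := by
    rw [hT, hS, hC, hM, ← lam_mul hl a t, ← lam_mul hl t a]
    exact ringST _ _ hAA hBB _ _ _
  have hUTU : UD * T * UD = S := by
    have hainv : a⁻¹ = a := inv_eq_of_mul_eq_one_right haa
    have htinv : t⁻¹ = t := inv_eq_of_mul_eq_one_right htt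
    have e1 : UD * (z₀ • (1 : HD →L[ℂ] HD)) * UD = z₀ • (1 : HD →L[ℂ] HD) := by
      rw [mul_smul_comm, smul_mul_assoc, mul_one, UD_mul_UD]
    have e2 : UD * (z₁ • lam a) * UD = -(z₁ • lam a) := by
      rw [mul_smul_comm, smul_mul_assoc, UD_lam hl a hainv]
      rw [ha, epsD_a, smul_smul, mul_neg_one, neg_smul]
    have e3 : UD * (z₂ • lam t) * UD = -(z₂ • lam t) := by
      rw [mul_smul_comm, smul_mul_assoc, UD_lam hl t htinv]
      rw [ht, epsD_t, smul_smul, mul_neg_one, neg_smul]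
    calc UD * T * UD
        = UD * (z₀ • (1 : HD →L[ℂ] HD)) * UD + UD * (z₁ • lam a) * UD +
          UD * (z₂ • lam t) * UD := by
          rw [hT, mul_add, mul_add, add_mul, add_mul]
      _ = S := by rw [e1, e2, e3, hS, sub_eq_add_neg, sub_eq_add_neg]
  have hU : IsUnit UD := isUnit_of_left_right UD_mul_UD UD_mul_UD
  have hunit : IsUnit T ↔ IsUnit C := by
    constructor
    · intro h
      have hSu : IsUnit S := by rw [← hUTU]; exact (hU.mul h).mul hU
      rw [← hTS]
      exact h.mul hSu
    · intro h
      obtain ⟨v, hv⟩ := h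
      have h1 : T * (S * ↑v⁻¹) = 1 := by
        rw [← mul_assoc, hTS, ← hv, Units.mul_inv]
      have h2 : (↑v⁻¹ * S) * T = 1 := by
        rw [mul_assoc, hST, ← hv, Units.inv_mul]
      exact isUnit_of_left_right h2 h1
  rw [hunit]
  by_cases hP : z₁ * z₂ = 0
  · have hC0 : C = (z₀ ^ 2 - z₁ ^ 2 - z₂ ^ 2) • (1 : HD →L[ℂ] HD) := by
      rw [hC, hP, zero_smul, sub_zero]
    rw [hC0]
    constructor
    · intro h
      refine ⟨0, by norm_num, ?_⟩
      have hw : z₀ ^ 2 - z₁ ^ 2 - z₂ ^ 2 = 0 := by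
        by_contra hw
        exact h ((isUnit_csmul_iff hw 1).mpr isUnit_one)
      rw [hw]
      push_cast
      ring
    · rintro ⟨x, hx, hxx⟩
      have h2 : 2 * z₁ * z₂ * (x : ℂ) = 0 := by
        rw [show (2 : ℂ) * z₁ * z₂ * (x : ℂ) = 2 * (z₁ * z₂) * (x : ℂ) by ring, hP]
        ring
      have hw : z₀ ^ 2 - z₁ ^ 2 - z₂ ^ 2 = 0 := by linear_combination hxx + h2
      rw [hw, zero_smul]
      intro h0
      have h01 : (0 : HD →L[ℂ] HD) = 1 := isUnit_zero_iff.mp h0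
      have h1n : ‖(1 : HD →L[ℂ] HD)‖ = 1 := norm_one
      rw [← h01, norm_zero] at h1n
      norm_num at h1n
  · have hw : (z₁ * z₂) * ((z₀ ^ 2 - z₁ ^ 2 - z₂ ^ 2) / (z₁ * z₂)) =
        z₀ ^ 2 - z₁ ^ 2 - z₂ ^ 2 := by
      exact mul_div_cancel₀ _ hP
    have hkey : C = (z₁ * z₂) •
        (((z₀ ^ 2 - z₁ ^ 2 - z₂ ^ 2) / (z₁ * z₂)) • (1 : HD →L[ℂ] HD) - M) := by
      rw [hC, smul_sub, smul_smul, hw]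
    rw [hkey, isUnit_csmul_iff hP]
    have hspec : ¬IsUnit (((z₀ ^ 2 - z₁ ^ 2 - z₂ ^ 2) / (z₁ * z₂)) • (1 : HD →L[ℂ] HD) - M)
        ↔ ((z₀ ^ 2 - z₁ ^ 2 - z₂ ^ 2) / (z₁ * z₂)) ∈ spectrum ℂ M := by
      rw [spectrum.mem_iff, Algebra.algebraMap_eq_smul_one]
  -- continue
    constructor
    · intro h
      obtain ⟨x, hx, hzx⟩ := spec_subset hl ha ht (hM ▸ hspec.mp h)
      refine ⟨x, hx, ?_⟩
      have hzx' : z₀ ^ 2 - z₁ ^ 2 - z₂ ^ 2 = 2 * (x : ℂ) * (z₁ * z₂) := by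
        rw [← hw, hzx]
        ring
      linear_combination hzx'
    · rintro ⟨x, hx, hxx⟩
      refine hspec.mpr ?_
      have heq : (z₀ ^ 2 - z₁ ^ 2 - z₂ ^ 2) / (z₁ * z₂) = 2 * (x : ℂ) := by
        rw [div_eq_iff hP]
        linear_combination hxx
      rw [heq, hM]
      exact two_x_mem_spectrum hl ha ht hx
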